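/- Let (𝔻, ω) be the unit disc in ℂ equipped with the Poincaré metric of constant Gaussian curvature −K < 0. If η is a global 1-form on 𝔻 with dη = ω, then ‖η‖²_{L∞} ≥ 1/K. -/

import Mathlib

set_option maxHeartbeats 1000000
open Real

noncomputable def sPhi (p : ℝ × ℝ) : ℂ := (p.1 : ℂ) * Complex.exp (p.2 * Complex.I)

noncomputable def sPhiD (p : ℝ × ℝ) : ℝ × ℝ →L[ℝ] ℂ :=
  (p.1 : ℂ) • (Complex.exp (p.2 * Complex.I) • ((ContinuousLinearMap.snd ℝ ℝ ℝ).smulRight Complex.I))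
    + Complex.exp (p.2 * Complex.I) • ((ContinuousLinearMap.fst ℝ ℝ ℝ).smulRight 1)

lemma sPhi_abs (p : ℝ × ℝ) : ‖sPhi p‖ = |p.1| := by
  simp [sPhi, Complex.norm_exp]

lemma hasFDerivAt_sPhi (p : ℝ × ℝ) : HasFDerivAt sPhi (sPhiD p) p := by
  have e1 : ⇑((ContinuousLinearMap.fst ℝ ℝ ℝ).smulRight (1 : ℂ))
      = fun q : ℝ × ℝ => (q.1 : ℂ) := by
    ext q; simp
  have e2 : ⇑((ContinuousLinearMap.snd ℝ ℝ ℝ).smulRight Complex.I)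
      = fun q : ℝ × ℝ => (q.2 : ℂ) * Complex.I := by
    ext q; simp [Complex.real_smul]
  have h1 : HasFDerivAt (fun q : ℝ × ℝ => (q.1 : ℂ))
      ((ContinuousLinearMap.fst ℝ ℝ ℝ).smulRight (1 : ℂ)) p := by
    rw [← e1]; exact ((ContinuousLinearMap.fst ℝ ℝ ℝ).smulRight (1 : ℂ)).hasFDerivAt
  have h0 : HasFDerivAt (fun q : ℝ × ℝ => (q.2 : ℂ) * Complex.I)
      ((ContinuousLinearMap.snd ℝ ℝ ℝ).smulRight Complex.I) p := by
    rw [← e2]; exact ((ContinuousLinearMap.snd ℝ ℝ ℝ).smulRight Complex.I).hasFDerivAt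
  have h2 := h0.cexp
  exact h1.mul h2

/-- derivative of `p ↦ a (sPhi p)` assuming `a` differentiable at `sPhi p`. -/
lemma hasFDerivAt_comp_sPhi {a : ℂ → ℝ} {p : ℝ × ℝ} (ha : DifferentiableAt ℝ a (sPhi p)) :
    HasFDerivAt (fun q => a (sPhi q)) ((fderiv ℝ a (sPhi p)).comp (sPhiD p)) p :=
  ha.hasFDerivAt.comp p (hasFDerivAt_sPhi p)

lemma hasFDerivAt_cos2 (p : ℝ × ℝ) :
    HasFDerivAt (fun q : ℝ × ℝ => Real.cos q.2)
      ((-Real.sin p.2) • (ContinuousLinearMap.snd ℝ ℝ ℝ)) p := by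
  exact (Real.hasDerivAt_cos p.2).comp_hasFDerivAt p
    ((ContinuousLinearMap.snd ℝ ℝ ℝ).hasFDerivAt)

lemma hasFDerivAt_sin2 (p : ℝ × ℝ) :
    HasFDerivAt (fun q : ℝ × ℝ => Real.sin q.2)
      ((Real.cos p.2) • (ContinuousLinearMap.snd ℝ ℝ ℝ)) p := by
  exact (Real.hasDerivAt_sin p.2).comp_hasFDerivAt p
    ((ContinuousLinearMap.snd ℝ ℝ ℝ).hasFDerivAt)

noncomputable def sAD (a b : ℂ → ℝ) (p : ℝ × ℝ) : ℝ × ℝ →L[ℝ] ℝ :=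
  (a (sPhi p) • ((-Real.sin p.2) • (ContinuousLinearMap.snd ℝ ℝ ℝ))
      + Real.cos p.2 • ((fderiv ℝ a (sPhi p)).comp (sPhiD p)))
  + (b (sPhi p) • ((Real.cos p.2) • (ContinuousLinearMap.snd ℝ ℝ ℝ))
      + Real.sin p.2 • ((fderiv ℝ b (sPhi p)).comp (sPhiD p)))

noncomputable def sBD (a b : ℂ → ℝ) (p : ℝ × ℝ) : ℝ × ℝ →L[ℝ] ℝ :=
  p.1 • ((b (sPhi p) • ((-Real.sin p.2) • (ContinuousLinearMap.snd ℝ ℝ ℝ))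
      + Real.cos p.2 • ((fderiv ℝ b (sPhi p)).comp (sPhiD p)))
    - (a (sPhi p) • ((Real.cos p.2) • (ContinuousLinearMap.snd ℝ ℝ ℝ))
      + Real.sin p.2 • ((fderiv ℝ a (sPhi p)).comp (sPhiD p))))
  + (b (sPhi p) * Real.cos p.2 - a (sPhi p) * Real.sin p.2) • (ContinuousLinearMap.fst ℝ ℝ ℝ)

lemma hasFDerivAt_sA {a b : ℂ → ℝ} {p : ℝ × ℝ}
    (ha : DifferentiableAt ℝ a (sPhi p)) (hb : DifferentiableAt ℝ b (sPhi p)) :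
    HasFDerivAt (fun q => a (sPhi q) * Real.cos q.2 + b (sPhi q) * Real.sin q.2)
      (sAD a b p) p :=
  ((hasFDerivAt_comp_sPhi ha).mul (hasFDerivAt_cos2 p)).add
    ((hasFDerivAt_comp_sPhi hb).mul (hasFDerivAt_sin2 p))

lemma hasFDerivAt_sB {a b : ℂ → ℝ} {p : ℝ × ℝ}
    (ha : DifferentiableAt ℝ a (sPhi p)) (hb : DifferentiableAt ℝ b (sPhi p)) :
    HasFDerivAt (fun q : ℝ × ℝ =>
        q.1 * (b (sPhi q) * Real.cos q.2 - a (sPhi q) * Real.sin q.2))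
      (sBD a b p) p := by
  have hfst : HasFDerivAt (fun q : ℝ × ℝ => q.1) (ContinuousLinearMap.fst ℝ ℝ ℝ) p :=
    (ContinuousLinearMap.fst ℝ ℝ ℝ).hasFDerivAt
  have hG : HasFDerivAt (fun q => b (sPhi q) * Real.cos q.2 - a (sPhi q) * Real.sin q.2)
      ((b (sPhi p) • ((-Real.sin p.2) • (ContinuousLinearMap.snd ℝ ℝ ℝ))
        + Real.cos p.2 • ((fderiv ℝ b (sPhi p)).comp (sPhiD p)))
      - (a (sPhi p) • ((Real.cos p.2) • (ContinuousLinearMap.snd ℝ ℝ ℝ))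
        + Real.sin p.2 • ((fderiv ℝ a (sPhi p)).comp (sPhiD p)))) p :=
    ((hasFDerivAt_comp_sPhi hb).mul (hasFDerivAt_cos2 p)).sub
      ((hasFDerivAt_comp_sPhi ha).mul (hasFDerivAt_sin2 p))
  exact hfst.mul hG

lemma sPhiD_apply10 (p : ℝ × ℝ) : sPhiD p (1, 0) = Complex.exp (p.2 * Complex.I) := by
  simp [sPhiD]

lemma sPhiD_apply01 (p : ℝ × ℝ) :
    sPhiD p (0, 1) = (-(p.1 * Real.sin p.2) : ℝ) • (1 : ℂ)
      + ((p.1 * Real.cos p.2 : ℝ)) • Complex.I := by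
  simp only [sPhiD, ContinuousLinearMap.add_apply, ContinuousLinearMap.coe_smul',
    Pi.smul_apply, ContinuousLinearMap.smulRight_apply, ContinuousLinearMap.coe_snd',
    ContinuousLinearMap.coe_fst']
  rw [Complex.exp_mul_I]
  push_cast
  simp [Complex.real_smul]
  ring_nf
  rw [Complex.ext_iff]
  constructor <;> simp <;> ring

lemma exp_theta_eq (t : ℝ) :
    Complex.exp (t * Complex.I) = (Real.cos t : ℝ) • (1 : ℂ) + (Real.sin t : ℝ) • Complex.I := by
  rw [Complex.exp_mul_I]
  simp [Complex.real_smul, Complex.ofReal_cos, Complex.ofReal_sin]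

lemma sdiv_eval (a b : ℂ → ℝ) (p : ℝ × ℝ) :
    sBD a b p (1, 0) - sAD a b p (0, 1)
      = p.1 * (fderiv ℝ b (sPhi p) 1 - fderiv ℝ a (sPhi p) Complex.I) := by
  set Da := fderiv ℝ a (sPhi p)
  set Db := fderiv ℝ b (sPhi p)
  set c := Real.cos p.2
  set s := Real.sin p.2
  have h10 : sPhiD p (1, 0) = c • (1 : ℂ) + s • Complex.I := by
    rw [sPhiD_apply10, exp_theta_eq]
  have h01 : sPhiD p (0, 1) = (-(p.1 * s) : ℝ) • (1 : ℂ) + ((p.1 * c : ℝ)) • Complex.I :=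
    sPhiD_apply01 p
  simp only [sBD, sAD, ContinuousLinearMap.add_apply, ContinuousLinearMap.sub_apply,
    ContinuousLinearMap.coe_smul', Pi.smul_apply, ContinuousLinearMap.comp_apply,
    ContinuousLinearMap.coe_snd', ContinuousLinearMap.coe_fst', h10, h01,
    map_add, map_smul]
  simp only [smul_eq_mul]
  have hsc : s ^ 2 + c ^ 2 = 1 := Real.sin_sq_add_cos_sq p.2
  linear_combination (p.1 * (Db 1) - p.1 * (Da Complex.I)) * hsc



/-!
STATEMENT 12. Let (𝔻, ω) be the unit disc in ℂ equipped with the Poincaré metric of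
constant Gaussian curvature −K < 0.  If η is a global 1-form on 𝔻 with dη = ω, then
‖η‖²_{L∞} ≥ 1/K.
-/

/-- **Lemma 6.3 (the disc case).**

The Poincaré metric of Gaussian curvature `−K < 0` on the unit disc
`𝔻 = {z ∈ ℂ : |z| < 1}` is the conformal metric `λ(z) |dz|²` with conformal factor
`λ(z) = 4 / (K (1 − |z|²)²)`, whose Kähler (area) form is `ω = λ dx ∧ dy`.

A global `1`-form on `𝔻` is written `η = a dx + b dy` with differentiable coefficients
`a, b : 𝔻 → ℝ`; then `dη = (∂b/∂x − ∂a/∂y) dx ∧ dy`, so the equation `dη = ω` reads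
`∂b/∂x − ∂a/∂y = λ` on `𝔻` (hypothesis `hdη`; `fderiv ℝ b z 1` is `∂b/∂x` and
`fderiv ℝ a z Complex.I` is `∂a/∂y`).  The pointwise squared norm of `η` measured by `ω` is
`|η|²_ω(z) = (a(z)² + b(z)²) / λ(z)`.

Conclusion: `‖η‖²_{L∞} = sup_𝔻 |η|²_ω ≥ 1/K`, expressed as: every upper bound `C` of
`|η|²_ω` on `𝔻` satisfies `1/K ≤ C`. -/
theorem statement12
    (K : ℝ) (hK : 0 < K)
    (a b : ℂ → ℝ)
    (ha : ∀ z ∈ Metric.ball (0 : ℂ) 1, DifferentiableAt ℝ a z)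
    (hb : ∀ z ∈ Metric.ball (0 : ℂ) 1, DifferentiableAt ℝ b z)
    (hdη : ∀ z ∈ Metric.ball (0 : ℂ) 1,
      fderiv ℝ b z 1 - fderiv ℝ a z Complex.I =
        4 / (K * (1 - ‖z‖ ^ 2) ^ 2))
    (C : ℝ)
    (hC : ∀ z ∈ Metric.ball (0 : ℂ) 1,
      (a z ^ 2 + b z ^ 2) / (4 / (K * (1 - ‖z‖ ^ 2) ^ 2)) ≤ C) :
    1 / K ≤ C := by
  have hπ : (0:ℝ) < π := Real.pi_pos
  -- C is nonnegative
  have hC0 : 0 ≤ C := by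
    refine le_trans ?_ (hC 0 (by simp))
    positivity
  set S : ℝ := Real.sqrt (C / K) with hS
  have hS0 : 0 ≤ S := Real.sqrt_nonneg _
  -- membership helper
  have hmem : ∀ p : ℝ × ℝ, |p.1| < 1 → sPhi p ∈ Metric.ball (0 : ℂ) 1 := by
    intro p hp
    simp [Metric.mem_ball, Complex.dist_eq, sPhi_abs, hp]
  -- the divergence identity
  have hdiv : ∀ p : ℝ × ℝ, |p.1| < 1 →
      sBD a b p (1, 0) + (-(sAD a b p)) (0, 1) = p.1 * (4 / (K * (1 - p.1 ^ 2) ^ 2)) := by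
    intro p hp
    have hz := hmem p hp
    have h1 : sBD a b p (1, 0) + (-(sAD a b p)) (0, 1)
        = sBD a b p (1, 0) - sAD a b p (0, 1) := by
      simp; ring
    rw [h1, sdiv_eval, hdη _ hz, sPhi_abs, sq_abs]
  -- main inequality for each radius r
  have key : ∀ r : ℝ, 0 < r → r < 1 → r ^ 2 / K ≤ S := by
    intro r hr0 hr1
    have h2π : (0:ℝ) ≤ 2 * π := by positivity
    have huIcc : Set.uIcc (0:ℝ) r = Set.Icc 0 r := Set.uIcc_of_le hr0.le
    -- differentiability facts on the strip
    have hdA : ∀ p : ℝ × ℝ, |p.1| < 1 →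
        HasFDerivAt (fun q => a (sPhi q) * Real.cos q.2 + b (sPhi q) * Real.sin q.2)
          (sAD a b p) p := fun p hp =>
      hasFDerivAt_sA (ha _ (hmem p hp)) (hb _ (hmem p hp))
    have hdB : ∀ p : ℝ × ℝ, |p.1| < 1 →
        HasFDerivAt (fun q : ℝ × ℝ =>
            q.1 * (b (sPhi q) * Real.cos q.2 - a (sPhi q) * Real.sin q.2))
          (sBD a b p) p := fun p hp =>
      hasFDerivAt_sB (ha _ (hmem p hp)) (hb _ (hmem p hp))
    have hmem1 : ∀ p : ℝ × ℝ, p ∈ Set.uIcc (0:ℝ) r ×ˢ Set.uIcc (0:ℝ) (2*π) → |p.1| < 1 := by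
      intro p hp
      rw [huIcc] at hp
      obtain ⟨⟨h1, h2⟩, -⟩ := hp
      rw [abs_lt]; constructor <;> nlinarith
    -- the divergence theorem
    have hgrn := MeasureTheory.integral2_divergence_prod_of_hasFDerivAt_off_countable
      (fun q : ℝ × ℝ => q.1 * (b (sPhi q) * Real.cos q.2 - a (sPhi q) * Real.sin q.2))
      (fun q : ℝ × ℝ => -(a (sPhi q) * Real.cos q.2 + b (sPhi q) * Real.sin q.2))
      (fun p => sBD a b p) (fun p => -(sAD a b p)) 0 0 r (2*π) ∅ Set.countable_empty
      (fun p hp => ((hdB p (hmem1 p hp)).continuousAt).continuousWithinAt)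
      (fun p hp => (((hdA p (hmem1 p hp)).neg).continuousAt).continuousWithinAt)
      (fun p hp => by
        refine hdB p ?_
        obtain ⟨⟨h1, h2⟩, -⟩ := hp.1
        simp only [min_eq_left hr0.le, max_eq_right hr0.le] at h1 h2 ⊢
        rw [abs_lt]; constructor <;> nlinarith)
      (fun p hp => by
        refine (hdA p ?_).neg
        obtain ⟨⟨h1, h2⟩, -⟩ := hp.1
        simp only [min_eq_left hr0.le, max_eq_right hr0.le] at h1 h2 ⊢
        rw [abs_lt]; constructor <;> nlinarith)
      (by
        -- integrability of the divergence
        have hco : ContinuousOn (fun p : ℝ × ℝ => p.1 * (4 / (K * (1 - p.1 ^ 2) ^ 2)))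
            (Set.uIcc (0:ℝ) r ×ˢ Set.uIcc (0:ℝ) (2*π)) := by
          refine (continuous_fst.continuousOn).mul
            (continuousOn_const.div ?_ ?_)
          · fun_prop
          · intro p hp
            have := hmem1 p hp
            have h1 : p.1 ^ 2 < 1 := by nlinarith [abs_nonneg p.1, sq_abs p.1, this]
            have h2 : (0:ℝ) < 1 - p.1 ^ 2 := by linarith
            positivity
        have hint : MeasureTheory.IntegrableOn
            (fun p : ℝ × ℝ => p.1 * (4 / (K * (1 - p.1 ^ 2) ^ 2)))
            (Set.uIcc (0:ℝ) r ×ˢ Set.uIcc (0:ℝ) (2*π)) :=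
          hco.integrableOn_compact (isCompact_uIcc.prod isCompact_uIcc)
        refine hint.congr_fun ?_ (measurableSet_uIcc.prod measurableSet_uIcc)
        intro p hp
        exact (hdiv p (hmem1 p hp)).symm)
    -- the θ-boundary terms cancel by periodicity
    have hg_per : ∀ x : ℝ,
        (fun q : ℝ × ℝ => -(a (sPhi q) * Real.cos q.2 + b (sPhi q) * Real.sin q.2)) (x, 2*π)
          = (fun q : ℝ × ℝ => -(a (sPhi q) * Real.cos q.2 + b (sPhi q) * Real.sin q.2)) (x, 0) := by
      intro x
      have hphi : sPhi (x, 2*π) = sPhi (x, 0) := by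
        simp only [sPhi]
        push_cast
        rw [Complex.exp_two_pi_mul_I]
        simp
      simp [hphi, Real.cos_two_pi, Real.sin_two_pi]
    have hg_cancel : (∫ x in (0:ℝ)..r,
        (fun q : ℝ × ℝ => -(a (sPhi q) * Real.cos q.2 + b (sPhi q) * Real.sin q.2)) (x, 2*π))
        = ∫ x in (0:ℝ)..r,
        (fun q : ℝ × ℝ => -(a (sPhi q) * Real.cos q.2 + b (sPhi q) * Real.sin q.2)) (x, 0) := by
      exact intervalIntegral.integral_congr fun x _ => hg_per x
    have hf0 : (∫ y in (0:ℝ)..2*π,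
        (fun q : ℝ × ℝ => q.1 * (b (sPhi q) * Real.cos q.2 - a (sPhi q) * Real.sin q.2)) (0, y))
        = 0 := by
      simp
    rw [hg_cancel, hf0] at hgrn
    -- evaluate the LHS (the hyperbolic area)
    have hinner : ∀ x ∈ Set.uIcc (0:ℝ) r,
        (∫ y in (0:ℝ)..2*π, ((sBD a b (x, y)) (1, 0) + (-(sAD a b (x, y))) (0, 1)))
          = 2*π*(x * (4 / (K * (1 - x ^ 2) ^ 2))) := by
      intro x hx
      rw [huIcc] at hx
      have hx1 : |x| < 1 := by
        rw [abs_lt]; constructor <;> nlinarith [hx.1, hx.2]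
      rw [intervalIntegral.integral_congr
        (g := fun _ : ℝ => x * (4 / (K * (1 - x ^ 2) ^ 2)))
        (fun y _ => hdiv (x, y) hx1)]
      rw [intervalIntegral.integral_const, smul_eq_mul]
      ring
    have hL : (∫ x in (0:ℝ)..r, ∫ y in (0:ℝ)..2*π,
        ((sBD a b (x, y)) (1, 0) + (-(sAD a b (x, y))) (0, 1)))
          = ∫ x in (0:ℝ)..r, 2*π*(x * (4 / (K * (1 - x ^ 2) ^ 2))) :=
      intervalIntegral.integral_congr fun x hx => hinner x hx
    have hu : (0:ℝ) < 1 - r ^ 2 := by nlinarith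
    have hFTC : (∫ x in (0:ℝ)..r, 2*π*(x * (4 / (K * (1 - x ^ 2) ^ 2))))
        = 4*π/(K*(1-r^2)) - 4*π/K := by
      have hderiv : ∀ x ∈ Set.uIcc (0:ℝ) r,
          HasDerivAt (fun t : ℝ => 4*π/(K*(1-t^2)))
            (2*π*(x * (4 / (K * (1 - x ^ 2) ^ 2)))) x := by
        intro x hx
        rw [huIcc] at hx
        have hx1 : (0:ℝ) < 1 - x ^ 2 := by nlinarith [hx.1, hx.2]
        have hne : K*(1-x^2) ≠ 0 := by positivity
        have h1 : HasDerivAt (fun t : ℝ => t^2) (2*x) x := by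
          simpa using hasDerivAt_pow 2 x
        have hd : HasDerivAt (fun t : ℝ => K*(1-t^2)) (K*(-(2*x))) x := by
          simpa using (h1.const_sub 1).const_mul K
        have := (hasDerivAt_const x (4*π)).div hd hne
        refine this.congr_deriv ?_
        rw [div_eq_iff (by positivity)]
        field_simp
        ring
      have hInt : IntervalIntegrable (fun x : ℝ => 2*π*(x * (4 / (K * (1 - x ^ 2) ^ 2))))
          MeasureTheory.volume 0 r := by
        apply ContinuousOn.intervalIntegrable
        refine continuousOn_const.mul ((continuousOn_id).mul
          (continuousOn_const.div ?_ ?_))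
        · fun_prop
        · intro x hx
          rw [huIcc] at hx
          have hx1 : (0:ℝ) < 1 - x ^ 2 := by nlinarith [hx.1, hx.2]
          positivity
      rw [intervalIntegral.integral_eq_sub_of_hasDerivAt hderiv hInt]
      norm_num
    -- bound the boundary term
    have hub : (∫ y in (0:ℝ)..2*π,
        (fun q : ℝ × ℝ => q.1 * (b (sPhi q) * Real.cos q.2 - a (sPhi q) * Real.sin q.2)) (r, y))
          ≤ 2*π * (r * (S * (2/(1-r^2)))) := by
      have habs : ∀ y : ℝ, |((r:ℝ), y).1| < 1 := by
        intro y; rw [abs_lt]; constructor <;> nlinarith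
      have hpt : ∀ y ∈ Set.Icc (0:ℝ) (2*π),
          (fun q : ℝ × ℝ => q.1 * (b (sPhi q) * Real.cos q.2 - a (sPhi q) * Real.sin q.2)) (r, y)
            ≤ r * (S * (2/(1-r^2))) := by
        intro y _
        have hz := hmem (r, y) (habs y)
        set z := sPhi (r, y) with hzdef
        have habsz : ‖z‖ = r := by
          rw [hzdef, sPhi_abs]; exact abs_of_pos hr0
        have hlam : (0:ℝ) < 4 / (K * (1 - r ^ 2) ^ 2) := by positivity
        have h2 : a z ^ 2 + b z ^ 2 ≤ C * (4 / (K * (1 - r ^ 2) ^ 2)) := by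
          have := hC z hz
          rw [habsz] at this
          calc a z ^ 2 + b z ^ 2
              = (a z ^ 2 + b z ^ 2) / (4 / (K * (1 - r ^ 2) ^ 2))
                * (4 / (K * (1 - r ^ 2) ^ 2)) := by field_simp
            _ ≤ C * (4 / (K * (1 - r ^ 2) ^ 2)) :=
              mul_le_mul_of_nonneg_right this hlam.le
        have h3 : b z * Real.cos y - a z * Real.sin y
            ≤ Real.sqrt (C * (4 / (K * (1 - r ^ 2) ^ 2))) := by
          have hsq : (b z * Real.cos y - a z * Real.sin y) ^ 2
              ≤ C * (4 / (K * (1 - r ^ 2) ^ 2)) := by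
            nlinarith [Real.sin_sq_add_cos_sq y, sq_nonneg (a z * Real.cos y + b z * Real.sin y)]
          calc b z * Real.cos y - a z * Real.sin y
              ≤ |b z * Real.cos y - a z * Real.sin y| := le_abs_self _
            _ = Real.sqrt ((b z * Real.cos y - a z * Real.sin y) ^ 2) :=
              (Real.sqrt_sq_eq_abs _).symm
            _ ≤ _ := Real.sqrt_le_sqrt hsq
        have h4 : Real.sqrt (C * (4 / (K * (1 - r ^ 2) ^ 2))) = S * (2/(1-r^2)) := by
          have he : C * (4 / (K * (1 - r ^ 2) ^ 2)) = (C/K) * (2/(1-r^2))^2 := by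
            rw [div_pow, div_mul_div_comm, mul_div_assoc]
            norm_num
          rw [he, Real.sqrt_mul (div_nonneg hC0 hK.le),
            Real.sqrt_sq (by positivity : (0:ℝ) ≤ 2/(1-r^2))]
        rw [h4] at h3
        exact mul_le_mul_of_nonneg_left h3 hr0.le
      have hib : IntervalIntegrable
          (fun y => (fun q : ℝ × ℝ =>
            q.1 * (b (sPhi q) * Real.cos q.2 - a (sPhi q) * Real.sin q.2)) (r, y))
          MeasureTheory.volume 0 (2*π) := by
        apply ContinuousOn.intervalIntegrable
        intro y _
        exact ((hdB (r, y) (habs y)).continuousAt.comp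
          ((Continuous.prodMk_right r).continuousAt)).continuousWithinAt
      calc _ ≤ ∫ _ in (0:ℝ)..2*π, r * (S * (2/(1-r^2))) :=
            intervalIntegral.integral_mono_on h2π hib intervalIntegrable_const hpt
        _ = 2*π * (r * (S * (2/(1-r^2)))) := by
            rw [intervalIntegral.integral_const]; simp [smul_eq_mul]
    rw [hL, hFTC] at hgrn
    -- combine
    have hineq : 4*π/(K*(1-r^2)) - 4*π/K ≤ 2*π * (r * (S * (2/(1-r^2)))) := by
      rw [hgrn]; simpa using hub
    have he1 : 4*π/(K*(1-r^2)) - 4*π/K = (4*π)*r^2/(K*(1-r^2)) := by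
      field_simp
      ring
    have he2 : 2*π * (r * (S * (2/(1-r^2)))) = (4*π)*(r*S)/(1-r^2) := by
      field_simp
      ring
    rw [he1, he2] at hineq
    have hcross : (4*π)*r^2*(1-r^2) ≤ (4*π)*(r*S)*(K*(1-r^2)) := by
      rw [div_le_div_iff₀ (by positivity) hu] at hineq
      nlinarith [hineq]
    rw [div_le_iff₀ hK]
    nlinarith [hcross, mul_pos hπ hu, mul_nonneg (mul_nonneg hS0 hK.le) (sub_nonneg.2 hr1.le),
      mul_pos (mul_pos hπ hu) hr0]
  -- pass to the limit r → 1
  have h1K : 1/K ≤ S := by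
    by_contra hlt
    push_neg at hlt
    have hKS0 : 0 ≤ K*S := mul_nonneg hK.le hS0
    have hKS : K*S < 1 := by
      have := mul_lt_mul_of_pos_left hlt hK
      rw [mul_one_div, div_self hK.ne'] at this
      exact this
    set q : ℝ := (K*S+1)/2 with hqdef
    have hq0 : 0 < q := by positivity
    have hq1 : q < 1 := by rw [hqdef]; linarith
    have hqgt : K*S < q := by rw [hqdef]; linarith
    have hr := key (Real.sqrt q) (Real.sqrt_pos.2 hq0)
      (by
        have h := Real.sqrt_lt_sqrt hq0.le hq1
        simpa using h)
    rw [Real.sq_sqrt hq0.le, div_le_iff₀ hK] at hr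
    nlinarith [hr]
  have hCK : (0:ℝ) ≤ C/K := div_nonneg hC0 hK.le
  have hSS : S^2 = C/K := by rw [hS]; exact Real.sq_sqrt hCK
  have h2 : (1/K)^2 ≤ C/K :=
    hSS ▸ pow_le_pow_left₀ (by positivity) h1K 2
  have h3 : (1:ℝ)/K = K * (1/K)^2 := by
    field_simp
  calc (1:ℝ)/K = K * (1/K)^2 := h3
    _ ≤ K * (C/K) := mul_le_mul_of_nonneg_left h2 hK.le
    _ = C := by rw [mul_comm, div_mul_cancel₀ _ hK.ne']
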